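/- Let A be an arbitrary real d×d matrix and B a real symmetric positive definite d×d matrix. If λ is a real eigenvalue of AB, then λ = λ₁λ₂ for some λ₁ ∈ S(A) and λ₂ ∈ S(B), where S(M) = {vᵀMv : ‖v‖ = 1}. In particular, if every element of S(A) is positive, then every real eigenvalue of AB is positive. -/

import Mathlib

open Matrix

lemma symm_shift {d : ℕ} {C : Matrix (Fin d) (Fin d) ℝ} (hC : Cᵀ = C)
    (a w : Fin d → ℝ) : (C *ᵥ a) ⬝ᵥ w = a ⬝ᵥ (C *ᵥ w) := by
  rw [dotProduct_comm, dotProduct_mulVec, ← hC, vecMul_transpose, dotProduct_comm, hC]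

lemma smul_quad {d : ℕ} (M : Matrix (Fin d) (Fin d) ℝ) (c : ℝ) (a : Fin d → ℝ) :
    (c • a) ⬝ᵥ (M *ᵥ (c • a)) = (c * c) * (a ⬝ᵥ (M *ᵥ a)) := by
  rw [mulVec_smul, smul_dotProduct, dotProduct_smul, smul_eq_mul, smul_eq_mul]; ring

lemma smul_dot {d : ℕ} (c : ℝ) (a : Fin d → ℝ) :
    (c • a) ⬝ᵥ (c • a) = (c * c) * (a ⬝ᵥ a) := by
  rw [smul_dotProduct, dotProduct_smul, smul_eq_mul, smul_eq_mul]; ring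

lemma dot_self_pos {d : ℕ} {a : Fin d → ℝ} (ha : a ≠ 0) : 0 < a ⬝ᵥ a := by
  rcases lt_or_eq_of_le (Finset.sum_nonneg fun i _ => mul_self_nonneg (a i) :
      (0:ℝ) ≤ a ⬝ᵥ a) with h1 | h1
  · exact h1
  · exact absurd (dotProduct_self_eq_zero.mp h1.symm) ha

open scoped MatrixOrder in
lemma exists_symm_sqrt {d : ℕ} {B : Matrix (Fin d) (Fin d) ℝ} (hB : B.PosSemidef) :
    ∃ C : Matrix (Fin d) (Fin d) ℝ, Cᵀ = C ∧ C * C = B :=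
  ⟨CFC.sqrt B, by
    rw [← conjTranspose_eq_transpose_of_trivial]
    exact (CFC.sqrt_nonneg B).posSemidef.isHermitian,
    CFC.sqrt_mul_sqrt_self B hB.nonneg⟩

theorem stmt_7 (d : ℕ) (A B : Matrix (Fin d) (Fin d) ℝ) (hB : B.PosDef) (lam : ℝ)
    (h : ∃ v : Fin d → ℝ, v ≠ 0 ∧ (A * B) *ᵥ v = lam • v) :
    (∃ lam₁ lam₂ : ℝ,
        (∃ v : Fin d → ℝ, v ⬝ᵥ v = 1 ∧ v ⬝ᵥ (A *ᵥ v) = lam₁) ∧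
        (∃ w : Fin d → ℝ, w ⬝ᵥ w = 1 ∧ w ⬝ᵥ (B *ᵥ w) = lam₂) ∧
        lam = lam₁ * lam₂) ∧
    ((∀ v : Fin d → ℝ, v ⬝ᵥ v = 1 → 0 < v ⬝ᵥ (A *ᵥ v)) → 0 < lam) := by
  obtain ⟨v, hv, hAB⟩ := h
  obtain ⟨C, hCsymm, hCC⟩ : ∃ C : Matrix (Fin d) (Fin d) ℝ, Cᵀ = C ∧ C * C = B :=
    exists_symm_sqrt hB.posSemidef
  have hBpos : ∀ x : Fin d → ℝ, x ≠ 0 → 0 < x ⬝ᵥ (B *ᵥ x) := by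
    intro x hx
    simpa using hB.dotProduct_mulVec_pos hx
  have hCvne : C *ᵥ v ≠ 0 := by
    intro hc
    have hB0 : B *ᵥ v = 0 := by rw [← hCC, ← mulVec_mulVec, hc, mulVec_zero]
    have h2 := hBpos v hv
    rw [hB0, dotProduct_zero] at h2
    exact lt_irrefl 0 h2
  have hn : 0 < (C *ᵥ v) ⬝ᵥ (C *ᵥ v) := dot_self_pos hCvne
  have hb : 0 < (C *ᵥ v) ⬝ᵥ (B *ᵥ (C *ᵥ v)) := hBpos _ hCvne
  -- abbreviations
  set n : ℝ := (C *ᵥ v) ⬝ᵥ (C *ᵥ v) with hndef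
  set b : ℝ := (C *ᵥ v) ⬝ᵥ (B *ᵥ (C *ᵥ v)) with hbdef
  -- eigen equation for C A C at C v
  have heig0 : C *ᵥ (A *ᵥ (C *ᵥ (C *ᵥ v))) = lam • (C *ᵥ v) := by
    rw [mulVec_mulVec v C C, hCC, mulVec_mulVec v A B, hAB, mulVec_smul]
  -- norm squared of C (C v)
  have hCu2 : (C *ᵥ (C *ᵥ v)) ⬝ᵥ (C *ᵥ (C *ᵥ v)) = b := by
    rw [symm_shift hCsymm, mulVec_mulVec (C *ᵥ v) C C, hCC, hbdef]
  -- quadratic form of A at C (C v)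
  have hquadA : (C *ᵥ (C *ᵥ v)) ⬝ᵥ (A *ᵥ (C *ᵥ (C *ᵥ v))) = lam * n := by
    rw [symm_shift hCsymm, heig0, dotProduct_smul, smul_eq_mul, hndef]
  have hsqn : Real.sqrt n * Real.sqrt n = n := Real.mul_self_sqrt hn.le
  have hsqb : Real.sqrt b * Real.sqrt b = b := Real.mul_self_sqrt hb.le
  have hsqn0 : Real.sqrt n ≠ 0 := (Real.sqrt_pos.mpr hn).ne'
  have hsqb0 : Real.sqrt b ≠ 0 := (Real.sqrt_pos.mpr hb).ne'
  have key : (∃ lam₁ lam₂ : ℝ,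
        (∃ v : Fin d → ℝ, v ⬝ᵥ v = 1 ∧ v ⬝ᵥ (A *ᵥ v) = lam₁) ∧
        (∃ w : Fin d → ℝ, w ⬝ᵥ w = 1 ∧ w ⬝ᵥ (B *ᵥ w) = lam₂) ∧
        lam = lam₁ * lam₂) := by
    refine ⟨lam * n / b, b / n,
      ⟨(Real.sqrt b)⁻¹ • (C *ᵥ (C *ᵥ v)), ?_, ?_⟩,
      ⟨(Real.sqrt n)⁻¹ • (C *ᵥ v), ?_, ?_⟩, ?_⟩
    · rw [smul_dot, hCu2, ← mul_inv, hsqb]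
      field_simp
    · rw [smul_quad, hquadA, ← mul_inv, hsqb]
      field_simp
    · rw [smul_dot, ← mul_inv, hsqn, hndef]
      exact inv_mul_cancel₀ hn.ne'
    · rw [smul_quad, ← mul_inv, hsqn, ← hbdef]
      field_simp
    · field_simp
  refine ⟨key, fun hpos => ?_⟩
  obtain ⟨lam₁, lam₂, ⟨x, hx1, hx2⟩, ⟨w, hw1, hw2⟩, hprod⟩ := key
  have hl1 : 0 < lam₁ := hx2 ▸ hpos x hx1
  have hwne : w ≠ 0 := by
    intro h0
    rw [h0] at hw1
    simp at hw1
  have hl2 : 0 < lam₂ := hw2 ▸ hBpos w hwne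
  rw [hprod]
  exact mul_pos hl1 hl2
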